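/- arXiv:2307.04209 — 7 statements merged into one kernel-verified Lean document; each statement's English description precedes it below -/
import Mathlib

section
/- For every integer p ≥ 5, the binomial coefficient C(p²-2p+1, p-1) is strictly greater than C(p-1, 3) · C(p²-2p+1, p-4). -/
theorem aux_poly_stmt_0 (q : ℕ) : ((q + 2) * (q + 3) * (q + 4)) ^ 2 <
    6 * ((q ^ 2 + 7 * q + 15) * (q ^ 2 + 7 * q + 14) * (q ^ 2 + 7 * q + 13)) := by
  have heq : 6 * ((q ^ 2 + 7 * q + 15) * (q ^ 2 + 7 * q + 14) * (q ^ 2 + 7 * q + 13)) =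
      ((q + 2) * (q + 3) * (q + 4)) ^ 2 +
      (5 * q ^ 6 + 108 * q ^ 5 + 1001 * q ^ 4 + 5070 * q ^ 3 + 14762 * q ^ 2 +
        23406 * q + 15804) := by ring
  rw [heq]
  exact Nat.lt_add_of_pos_right (by positivity)

theorem aux_main_stmt_0 (q n : ℕ) (hndef : n = q ^ 2 + 8 * q + 16) :
    (q + 4).choose 3 * n.choose (q + 1) < n.choose (q + 4) := by
  have sub1 : n - (q + 1) = q ^ 2 + 7 * q + 15 :=
    Nat.sub_eq_of_eq_add (by rw [hndef]; ring)
  have sub2 : n - (q + 2) = q ^ 2 + 7 * q + 14 :=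
    Nat.sub_eq_of_eq_add (by rw [hndef]; ring)
  have sub3 : n - (q + 3) = q ^ 2 + 7 * q + 13 :=
    Nat.sub_eq_of_eq_add (by rw [hndef]; ring)
  have hApos : 0 < n.choose (q + 1) := Nat.choose_pos (by subst hndef; nlinarith)
  -- chain of choose relations
  have c1 : n.choose (q + 2) * (q + 2) = n.choose (q + 1) * (q ^ 2 + 7 * q + 15) := by
    have := Nat.choose_succ_right_eq n (q + 1)
    have e : q + 1 + 1 = q + 2 := by omega
    rw [e, sub1] at this
    exact this
  have c2 : n.choose (q + 3) * (q + 3) = n.choose (q + 2) * (q ^ 2 + 7 * q + 14) := by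
    have := Nat.choose_succ_right_eq n (q + 2)
    have e : q + 2 + 1 = q + 3 := by omega
    rw [e, sub2] at this
    exact this
  have c3 : n.choose (q + 4) * (q + 4) = n.choose (q + 3) * (q ^ 2 + 7 * q + 13) := by
    have := Nat.choose_succ_right_eq n (q + 3)
    have e : q + 3 + 1 = q + 4 := by omega
    rw [e, sub3] at this
    exact this
  have key : n.choose (q + 4) * ((q + 2) * (q + 3) * (q + 4)) =
      n.choose (q + 1) * ((q ^ 2 + 7 * q + 15) * (q ^ 2 + 7 * q + 14) * (q ^ 2 + 7 * q + 13)) := by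
    calc n.choose (q + 4) * ((q + 2) * (q + 3) * (q + 4))
        = (n.choose (q + 4) * (q + 4)) * (q + 3) * (q + 2) := by ring
      _ = (n.choose (q + 3) * (q ^ 2 + 7 * q + 13)) * (q + 3) * (q + 2) := by rw [c3]
      _ = (n.choose (q + 3) * (q + 3)) * (q ^ 2 + 7 * q + 13) * (q + 2) := by ring
      _ = (n.choose (q + 2) * (q ^ 2 + 7 * q + 14)) * (q ^ 2 + 7 * q + 13) * (q + 2) := by
          rw [c2]
      _ = (n.choose (q + 2) * (q + 2)) * ((q ^ 2 + 7 * q + 14) * (q ^ 2 + 7 * q + 13)) := by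
          ring
      _ = (n.choose (q + 1) * (q ^ 2 + 7 * q + 15)) * ((q ^ 2 + 7 * q + 14) * (q ^ 2 + 7 * q + 13)) := by
          rw [c1]
      _ = n.choose (q + 1) * ((q ^ 2 + 7 * q + 15) * (q ^ 2 + 7 * q + 14) * (q ^ 2 + 7 * q + 13)) := by ring
  -- compute 6 * C(q+4, 3)
  have h2 : (q + 4).choose 2 * 2 = (q + 4) * (q + 3) := by
    have := Nat.choose_succ_right_eq (q + 4) 1
    have e : (1 : ℕ) + 1 = 2 := rfl
    rw [e, Nat.choose_one_right] at this
    have e2 : q + 4 - 1 = q + 3 := by omega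
    rw [e2] at this
    exact this
  have h3 : (q + 4).choose 3 * 6 = (q + 2) * (q + 3) * (q + 4) := by
    have := Nat.choose_succ_right_eq (q + 4) 2
    have e : (2 : ℕ) + 1 = 3 := rfl
    have e2 : q + 4 - 2 = q + 2 := by omega
    rw [e, e2] at this
    calc (q + 4).choose 3 * 6 = ((q + 4).choose 3 * 3) * 2 := by ring
      _ = ((q + 4).choose 2 * (q + 2)) * 2 := by rw [this]
      _ = ((q + 4).choose 2 * 2) * (q + 2) := by ring
      _ = (q + 4) * (q + 3) * (q + 2) := by rw [h2]
      _ = (q + 2) * (q + 3) * (q + 4) := by ring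
  -- conclude P > C(q+4,3) * K
  have hPK : (q + 4).choose 3 * ((q + 2) * (q + 3) * (q + 4)) <
      (q ^ 2 + 7 * q + 15) * (q ^ 2 + 7 * q + 14) * (q ^ 2 + 7 * q + 13) := by
    have h6 : 6 * ((q + 4).choose 3 * ((q + 2) * (q + 3) * (q + 4))) <
        6 * ((q ^ 2 + 7 * q + 15) * (q ^ 2 + 7 * q + 14) * (q ^ 2 + 7 * q + 13)) := by
      calc 6 * ((q + 4).choose 3 * ((q + 2) * (q + 3) * (q + 4)))
          = ((q + 4).choose 3 * 6) * ((q + 2) * (q + 3) * (q + 4)) := by ring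
        _ = ((q + 2) * (q + 3) * (q + 4)) * ((q + 2) * (q + 3) * (q + 4)) := by rw [h3]
        _ = ((q + 2) * (q + 3) * (q + 4)) ^ 2 := by ring
        _ < _ := aux_poly_stmt_0 q
    exact Nat.lt_of_mul_lt_mul_left h6
  -- final multiplication trick
  have hmul : ((q + 4).choose 3 * n.choose (q + 1)) * ((q + 2) * (q + 3) * (q + 4)) <
      n.choose (q + 4) * ((q + 2) * (q + 3) * (q + 4)) := by
    rw [key]
    calc ((q + 4).choose 3 * n.choose (q + 1)) * ((q + 2) * (q + 3) * (q + 4))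
        = n.choose (q + 1) * ((q + 4).choose 3 * ((q + 2) * (q + 3) * (q + 4))) := by ring
      _ < n.choose (q + 1) *
            ((q ^ 2 + 7 * q + 15) * (q ^ 2 + 7 * q + 14) * (q ^ 2 + 7 * q + 13)) :=
          Nat.mul_lt_mul_of_pos_left hPK hApos
  exact Nat.lt_of_mul_lt_mul_right hmul

theorem stmt_0 (p : ℕ) (hp : 5 ≤ p) :
    (p ^ 2 - 2 * p + 1).choose (p - 1) >
      (p - 1).choose 3 * (p ^ 2 - 2 * p + 1).choose (p - 4) := by
  obtain ⟨q, rfl⟩ := Nat.exists_eq_add_of_le hp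
  have hsq : (5 + q) ^ 2 = q ^ 2 + 10 * q + 25 := by ring
  have hn : (5 + q) ^ 2 - 2 * (5 + q) + 1 = q ^ 2 + 8 * q + 16 := by omega
  have hp1 : 5 + q - 1 = q + 4 := by omega
  have hp4 : 5 + q - 4 = q + 1 := by omega
  rw [hn, hp1, hp4]
  exact aux_main_stmt_0 q _ rfl
end

section
/- For every integer p ≥ 5, we have 2 · C(p²-2p+1, p-4) · C(p-1, 3) > Σ_{ℓ=0}^{p-4} (p-3-ℓ) · C(p-1, p-1-ℓ) · C(p²-2p+1, ℓ). -/
lemma sum_lt_aux (f : ℕ → ℕ) (n : ℕ) (h0 : 0 < f 0)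
    (hstep : ∀ k < n, 2 * f k ≤ f (k + 1)) :
    ∑ i ∈ Finset.range (n + 1), f i < 2 * f n := by
  induction n with
  | zero =>
    simp only [zero_add, Finset.sum_range_one]
    omega
  | succ n ih =>
    rw [Finset.sum_range_succ]
    have h1 := hstep n (by omega)
    have h2 : ∑ i ∈ Finset.range (n + 1), f i < 2 * f n :=
      ih (fun k hk => hstep k (by omega))
    omega

lemma key_step (ℓ j : ℕ) :
    2 * ((j + 2) * ((ℓ + j + 4).choose (j + 4)) * (((ℓ + j + 4) ^ 2).choose ℓ))
      ≤ (j + 1) * ((ℓ + j + 4).choose (j + 3)) * (((ℓ + j + 4) ^ 2).choose (ℓ + 1)) := by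
  set a := (ℓ + j + 4).choose (j + 4) with ha
  set b := (ℓ + j + 4).choose (j + 3) with hb
  set c := ((ℓ + j + 4) ^ 2).choose ℓ with hc
  set d := ((ℓ + j + 4) ^ 2).choose (ℓ + 1) with hd
  have h1 : a * (j + 4) = b * (ℓ + 1) := by
    have h := Nat.choose_succ_right_eq (ℓ + j + 4) (j + 3)
    simpa [show ℓ + j + 4 - (j + 3) = ℓ + 1 from by omega] using h
  have hK : (ℓ + j + 4) ^ 2 - ℓ = ℓ ^ 2 + ℓ * (2 * j + 7) + (j + 4) ^ 2 := by
    have hle : ℓ ≤ (ℓ + j + 4) ^ 2 := by nlinarith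
    zify [hle]; ring
  have h2 : d * (ℓ + 1) = c * (ℓ ^ 2 + ℓ * (2 * j + 7) + (j + 4) ^ 2) := by
    have h := Nat.choose_succ_right_eq ((ℓ + j + 4) ^ 2) ℓ
    rw [hK] at h; exact h
  have harith : 2 * (j + 2) * ((ℓ + 1) * (ℓ + 1))
      ≤ (j + 1) * (j + 4) * (ℓ ^ 2 + ℓ * (2 * j + 7) + (j + 4) ^ 2) := by
    have c1 : 2 * j + 4 ≤ (j + 1) * (j + 4) := by nlinarith
    have c2 : 4 * j + 8 ≤ (j + 1) * ((j + 4) * (2 * j + 7)) := by nlinarith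
    have c3 : 2 * j + 4 ≤ (j + 1) * ((j + 4) * (j + 4) ^ 2) := by nlinarith
    calc 2 * (j + 2) * ((ℓ + 1) * (ℓ + 1))
        = (2 * j + 4) * ℓ ^ 2 + (4 * j + 8) * ℓ + (2 * j + 4) := by ring
      _ ≤ ((j + 1) * (j + 4)) * ℓ ^ 2 + ((j + 1) * ((j + 4) * (2 * j + 7))) * ℓ +
            ((j + 1) * ((j + 4) * (j + 4) ^ 2)) :=
          add_le_add (add_le_add (Nat.mul_le_mul_right _ c1) (Nat.mul_le_mul_right _ c2)) c3
      _ = (j + 1) * (j + 4) * (ℓ ^ 2 + ℓ * (2 * j + 7) + (j + 4) ^ 2) := by ring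
  have hmul : (ℓ + 1) * (ℓ + 1) * (2 * ((j + 2) * a * c))
      ≤ (ℓ + 1) * (ℓ + 1) * ((j + 1) * b * d) := by
    calc (ℓ + 1) * (ℓ + 1) * (2 * ((j + 2) * a * c))
        = (2 * (j + 2) * ((ℓ + 1) * (ℓ + 1))) * (a * c) := by ring
      _ ≤ ((j + 1) * (j + 4) * (ℓ ^ 2 + ℓ * (2 * j + 7) + (j + 4) ^ 2)) * (a * c) :=
          Nat.mul_le_mul_right _ harith
      _ = (j + 1) * ((a * (j + 4)) * (c * (ℓ ^ 2 + ℓ * (2 * j + 7) + (j + 4) ^ 2))) := by ring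
      _ = (j + 1) * ((b * (ℓ + 1)) * (d * (ℓ + 1))) := by rw [h1, h2]
      _ = (ℓ + 1) * (ℓ + 1) * ((j + 1) * b * d) := by ring
  exact Nat.le_of_mul_le_mul_left hmul (by positivity)

theorem stmt_1 (p : ℕ) (hp : 5 ≤ p) :
    2 * (p ^ 2 - 2 * p + 1).choose (p - 4) * (p - 1).choose 3 >
      ∑ ℓ ∈ Finset.range (p - 3),
        (p - 3 - ℓ) * (p - 1).choose (p - 1 - ℓ) * (p ^ 2 - 2 * p + 1).choose ℓ := by
  have hstep : ∀ k, k < p - 4 →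
      2 * ((p - 3 - k) * (p - 1).choose (p - 1 - k) * (p ^ 2 - 2 * p + 1).choose k)
        ≤ (p - 3 - (k + 1)) * (p - 1).choose (p - 1 - (k + 1)) *
            (p ^ 2 - 2 * p + 1).choose (k + 1) := by
    intro k hk
    obtain ⟨j, rfl⟩ : ∃ j, p = k + j + 5 := ⟨p - k - 5, by omega⟩
    have hN : (k + j + 5) ^ 2 - 2 * (k + j + 5) + 1 = (k + j + 4) ^ 2 := by
      have hle : 2 * (k + j + 5) ≤ (k + j + 5) ^ 2 := by nlinarith
      zify [hle]; ring
    rw [hN, show k + j + 5 - 1 = k + j + 4 from by omega,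
      show k + j + 5 - 3 - k = j + 2 from by omega,
      show k + j + 4 - k = j + 4 from by omega,
      show k + j + 5 - 3 - (k + 1) = j + 1 from by omega,
      show k + j + 4 - (k + 1) = j + 3 from by omega]
    exact key_step k j
  rw [gt_iff_lt, show Finset.range (p - 3) = Finset.range ((p - 4) + 1) from by
    rw [show p - 3 = (p - 4) + 1 from by omega]]
  set f : ℕ → ℕ :=
    fun ℓ => (p - 3 - ℓ) * (p - 1).choose (p - 1 - ℓ) * (p ^ 2 - 2 * p + 1).choose ℓ with hf
  have h0 : 0 < f 0 := by
    simp only [hf, Nat.sub_zero, Nat.choose_self, Nat.choose_zero_right, mul_one]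
    omega
  have hlt := sum_lt_aux f (p - 4) h0 (fun k hk => hstep k hk)
  have hfe : 2 * f (p - 4) = 2 * (p ^ 2 - 2 * p + 1).choose (p - 4) * (p - 1).choose 3 := by
    simp only [hf]
    rw [show p - 3 - (p - 4) = 1 from by omega, show p - 1 - (p - 4) = 3 from by omega]
    ring
  rw [← hfe]
  exact hlt
end

section
/- For every integer p ≥ 5, Σ_{ℓ=0}^{p-1} ℓ · C(p²-2p+1, ℓ) · C(p-1, ℓ) > (p-3) · C(p²-p, p-1). -/
open Finset

lemma sum_lem (q : ℕ) (hq : 1 ≤ q) :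
    ∑ ℓ ∈ Finset.range (q + 1), ℓ * (q ^ 2).choose ℓ * q.choose ℓ
      = q ^ 2 * (q ^ 2 - 1 + q).choose (q - 1) := by
  have hq2 : 1 ≤ q ^ 2 := Nat.one_le_pow _ _ hq
  rw [Finset.sum_range_succ']
  simp only [Nat.zero_mul, Nat.add_zero]
  have step : ∀ i ∈ Finset.range q,
      (i + 1) * (q ^ 2).choose (i + 1) * q.choose (i + 1)
        = q ^ 2 * ((q ^ 2 - 1).choose i * q.choose (q - 1 - i)) := by
    intro i hi
    have hi' : i < q := Finset.mem_range.mp hi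
    have h1 : (q ^ 2 - 1).succ = q ^ 2 := Nat.succ_pred_eq_of_pos hq2
    have h2 : (q ^ 2 - 1).succ * (q ^ 2 - 1).choose i
        = (q ^ 2 - 1).succ.choose (i + 1) * (i + 1) := Nat.add_one_mul_choose_eq _ _
    rw [h1] at h2
    have h5 : (i + 1) * (q ^ 2).choose (i + 1) = q ^ 2 * (q ^ 2 - 1).choose i := by
      rw [h2, Nat.mul_comm]
    have h3 : q.choose (q - (i + 1)) = q.choose (i + 1) :=
      Nat.choose_symm (by omega)
    have h4 : q - (i + 1) = q - 1 - i := by omega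
    rw [← h4, h3, h5, Nat.mul_assoc]
  rw [Finset.sum_congr rfl step, ← Finset.mul_sum]
  congr 1
  rw [Nat.add_choose_eq, Finset.Nat.sum_antidiagonal_eq_sum_range_succ_mk,
    show (q - 1).succ = q from by omega]

theorem stmt_2 (p : ℕ) (hp : 5 ≤ p) :
    ∑ ℓ ∈ Finset.range p, ℓ * (p ^ 2 - 2 * p + 1).choose ℓ * (p - 1).choose ℓ >
      (p - 3) * (p ^ 2 - p).choose (p - 1) := by
  obtain ⟨q, rfl⟩ : ∃ q, p = q + 1 := ⟨p - 1, by omega⟩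
  have hq : 4 ≤ q := by omega
  have hq2 : 1 ≤ q ^ 2 := Nat.one_le_pow _ _ (by omega)
  have e1 : (q + 1) ^ 2 - 2 * (q + 1) + 1 = q ^ 2 := by
    have : (q + 1) ^ 2 = q ^ 2 + 2 * q + 1 := by ring
    omega
  have e2 : (q + 1) ^ 2 - (q + 1) = q ^ 2 + q := by
    have : (q + 1) ^ 2 = q ^ 2 + 2 * q + 1 := by ring
    omega
  have e3 : q + 1 - 1 = q := by omega
  have e4 : q + 1 - 3 = q - 2 := by omega
  rw [e1, e2, e3, e4, sum_lem q (by omega)]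
  set M := q ^ 2 - 1 + q with hM
  have hM1 : M + 1 = q ^ 2 + q := by omega
  rw [← hM1]
  have hCpos : 0 < M.choose (q - 1) := Nat.choose_pos (by omega)
  have h5 : M.succ * M.choose (q - 1) = M.succ.choose (q - 1 + 1) * (q - 1 + 1) :=
    Nat.add_one_mul_choose_eq _ _
  have hq1 : q - 1 + 1 = q := by omega
  rw [hq1, Nat.succ_eq_add_one] at h5
  have key : q * ((q - 2) * (M + 1).choose q) < q * (q ^ 2 * M.choose (q - 1)) := by
    have heq : q * ((q - 2) * (M + 1).choose q) = (q - 2) * ((M + 1) * M.choose (q - 1)) := by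
      calc q * ((q - 2) * (M + 1).choose q) = (q - 2) * ((M + 1).choose q * q) := by ring
        _ = (q - 2) * ((M + 1) * M.choose (q - 1)) := by rw [← h5]
    rw [heq]
    have hlt : (q - 2) * (M + 1) < q * q ^ 2 := by
      rw [hM1]
      obtain ⟨s, rfl⟩ : ∃ s, q = s + 2 := ⟨q - 2, by omega⟩
      have : s + 2 - 2 = s := by omega
      rw [this]
      nlinarith [sq_nonneg s]
    calc (q - 2) * ((M + 1) * M.choose (q - 1))
        = ((q - 2) * (M + 1)) * M.choose (q - 1) := by ring
      _ < (q * q ^ 2) * M.choose (q - 1) := (Nat.mul_lt_mul_right hCpos).mpr hlt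
      _ = q * (q ^ 2 * M.choose (q - 1)) := by ring
  exact lt_of_mul_lt_mul_left key (Nat.zero_le q)
end

section
/- For integers 0 ≤ ℓ ≤ p-5 with p ≥ 5, the ratio d_ℓ / d_{ℓ+1} is at most d_{p-5} / d_{p-4}, where d_ℓ = (p-3-ℓ) · C(p-1, p-1-ℓ) · C(p²-2p+1, ℓ); equivalently, the function ℓ ↦ ((p-3-ℓ)/(p-4-ℓ)) · (ℓ+1)² / ((p²-2p+1-ℓ)(p-1-ℓ)) is monotonically increasing for ℓ in {0,1,...,p-5}. -/
/-- `d p ℓ = (p-3-ℓ) · C(p-1, p-1-ℓ) · C(p²-2p+1, ℓ)`. -/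
def d (p ℓ : ℕ) : ℕ :=
  (p - 3 - ℓ) * (p - 1).choose (p - 1 - ℓ) * (p ^ 2 - 2 * p + 1).choose ℓ

/-- Numerator of the ratio `d p ℓ / d p (ℓ+1)`. -/
def dnum (p ℓ : ℕ) : ℕ := (p - 3 - ℓ) * ((ℓ + 1) * (ℓ + 1))

/-- Denominator of the ratio `d p ℓ / d p (ℓ+1)`. -/
def dden (p ℓ : ℕ) : ℕ := (p - 4 - ℓ) * ((p - 1 - ℓ) * ((p ^ 2 - 2 * p + 1) - ℓ))

lemma hp_sq {p : ℕ} (hp : 5 ≤ p) : p - 4 ≤ p ^ 2 - 2 * p + 1 := by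
  have h1 : p ^ 2 = p * p := sq p
  have h2 : 5 * p ≤ p * p := Nat.mul_le_mul_right p hp
  omega

lemma dkey (p ℓ : ℕ) (hp : 5 ≤ p) (hℓ : ℓ ≤ p - 5) :
    d p ℓ * dden p ℓ = d p (ℓ + 1) * dnum p ℓ := by
  unfold d dden dnum
  set N := p ^ 2 - 2 * p + 1 with hN
  have hℓp : ℓ ≤ p - 1 := by omega
  have hℓp' : ℓ + 1 ≤ p - 1 := by omega
  have hs1 : (p - 1).choose (p - 1 - ℓ) = (p - 1).choose ℓ := Nat.choose_symm hℓp
  have hs2 : (p - 1).choose (p - 1 - (ℓ + 1)) = (p - 1).choose (ℓ + 1) :=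
    Nat.choose_symm hℓp'
  have he : p - 3 - (ℓ + 1) = p - 4 - ℓ := by omega
  rw [hs1, hs2, he]
  have h1 : (p - 1).choose (ℓ + 1) * (ℓ + 1) = (p - 1).choose ℓ * (p - 1 - ℓ) :=
    Nat.choose_succ_right_eq (p - 1) ℓ
  have h2 : N.choose (ℓ + 1) * (ℓ + 1) = N.choose ℓ * (N - ℓ) :=
    Nat.choose_succ_right_eq N ℓ
  calc (p - 3 - ℓ) * (p - 1).choose ℓ * N.choose ℓ *
        ((p - 4 - ℓ) * ((p - 1 - ℓ) * (N - ℓ)))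
      = (p - 4 - ℓ) * ((p - 1).choose ℓ * (p - 1 - ℓ)) * (N.choose ℓ * (N - ℓ)) *
        (p - 3 - ℓ) := by ring
    _ = (p - 4 - ℓ) * ((p - 1).choose (ℓ + 1) * (ℓ + 1)) *
        (N.choose (ℓ + 1) * (ℓ + 1)) * (p - 3 - ℓ) := by rw [h1, h2]
    _ = (p - 4 - ℓ) * (p - 1).choose (ℓ + 1) * N.choose (ℓ + 1) *
        ((p - 3 - ℓ) * ((ℓ + 1) * (ℓ + 1))) := by ring

lemma dpos (p ℓ : ℕ) (hp : 5 ≤ p) (hℓ : ℓ ≤ p - 5) : 0 < d p (ℓ + 1) := by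
  unfold d
  have h1 : 0 < p - 3 - (ℓ + 1) := by omega
  have h2 : 0 < (p - 1).choose (p - 1 - (ℓ + 1)) := Nat.choose_pos (Nat.sub_le _ _)
  have h3 : 0 < (p ^ 2 - 2 * p + 1).choose (ℓ + 1) :=
    Nat.choose_pos (le_trans (by omega) (hp_sq hp))
  positivity

lemma ddenpos (p ℓ : ℕ) (hp : 5 ≤ p) (hℓ : ℓ ≤ p - 5) : 0 < dden p ℓ := by
  unfold dden
  have h1 : 0 < p - 4 - ℓ := by omega
  have h2 : 0 < p - 1 - ℓ := by omega
  have h3 : 0 < p ^ 2 - 2 * p + 1 - ℓ := by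
    have := hp_sq hp; omega
  positivity

lemma ratio_eq (p ℓ : ℕ) (hp : 5 ≤ p) (hℓ : ℓ ≤ p - 5) :
    (d p ℓ : ℝ) / (d p (ℓ + 1) : ℝ) = (dnum p ℓ : ℝ) / (dden p ℓ : ℝ) := by
  have hb : (0 : ℝ) < (d p (ℓ + 1) : ℝ) := by exact_mod_cast dpos p ℓ hp hℓ
  have hd : (0 : ℝ) < (dden p ℓ : ℝ) := by exact_mod_cast ddenpos p ℓ hp hℓ
  rw [div_eq_div_iff hb.ne' hd.ne']
  have h := dkey p ℓ hp hℓ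
  exact_mod_cast (mul_comm (d p (ℓ + 1)) (dnum p ℓ)) ▸ h

lemma cross_key (ℓ k a u : ℕ) :
    (k + 2) * ((ℓ + 1) * (ℓ + 1)) * (1 * (4 * u)) ≤
      2 * ((ℓ + k + 1) * (ℓ + k + 1)) * ((k + 1) * ((k + 4) * (u + k))) := by
  have e1 : (ℓ + 1) * (ℓ + 1) ≤ (ℓ + k + 1) * (ℓ + k + 1) :=
    Nat.mul_le_mul (by omega) (by omega)
  have e2 : 4 * (k + 2) ≤ 2 * ((k + 1) * (k + 4)) := by nlinarith
  have e3 : u ≤ u + k := Nat.le_add_right u k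
  calc (k + 2) * ((ℓ + 1) * (ℓ + 1)) * (1 * (4 * u))
      = 4 * (k + 2) * ((ℓ + 1) * (ℓ + 1)) * u := by ring
    _ ≤ 2 * ((k + 1) * (k + 4)) * ((ℓ + k + 1) * (ℓ + k + 1)) * (u + k) :=
        Nat.mul_le_mul (Nat.mul_le_mul e2 e1) e3
    _ = 2 * ((ℓ + k + 1) * (ℓ + k + 1)) * ((k + 1) * ((k + 4) * (u + k))) := by ring

lemma cross (p ℓ : ℕ) (hp : 5 ≤ p) (hℓ : ℓ ≤ p - 5) :
    dnum p ℓ * dden p (p - 5) ≤ dnum p (p - 5) * dden p ℓ := by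
  obtain ⟨k, hk⟩ : ∃ k, p = ℓ + k + 5 := ⟨p - 5 - ℓ, by omega⟩
  subst hk
  unfold dnum dden
  simp only [show ℓ + k + 5 - 5 = ℓ + k from by omega]
  have hsq : (ℓ + k + 5) ^ 2 = (ℓ + k + 4) * (ℓ + k + 4) + (2 * (ℓ + k) + 9) := by ring
  have hNa : (ℓ + k + 5) ^ 2 - 2 * (ℓ + k + 5) + 1 = (ℓ + k + 4) * (ℓ + k + 4) := by
    have h1 : 1 ≤ (ℓ + k + 4) * (ℓ + k + 4) := Nat.one_le_iff_ne_zero.2 (by positivity)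
    omega
  have ha : ℓ + k ≤ (ℓ + k + 4) * (ℓ + k + 4) := by nlinarith
  rw [hNa]
  rw [show ℓ + k + 5 - 3 - ℓ = k + 2 from by omega,
      show ℓ + k + 5 - 3 - (ℓ + k) = 2 from by omega,
      show ℓ + k + 5 - 4 - (ℓ + k) = 1 from by omega,
      show ℓ + k + 5 - 1 - (ℓ + k) = 4 from by omega,
      show ℓ + k + 5 - 4 - ℓ = k + 1 from by omega,
      show ℓ + k + 5 - 1 - ℓ = k + 4 from by omega]
  obtain ⟨X, hX⟩ : ∃ X, (ℓ + k + 4) * (ℓ + k + 4) = X := ⟨_, rfl⟩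
  rw [hX] at ha ⊢
  obtain ⟨u, hu⟩ : ∃ u, X - (ℓ + k) = u := ⟨_, rfl⟩
  have hu' : X - ℓ = u + k := by omega
  rw [hu, hu']
  exact cross_key ℓ k X u

theorem stmt_3 (p ℓ : ℕ) (hp : 5 ≤ p) (hℓ : ℓ ≤ p - 5) :
    (d p ℓ : ℝ) / (d p (ℓ + 1) : ℝ) ≤ (d p (p - 5) : ℝ) / (d p (p - 4) : ℝ) := by
  have h45 : p - 5 + 1 = p - 4 := by omega
  have hr1 := ratio_eq p ℓ hp hℓ
  have hr2 := ratio_eq p (p - 5) hp le_rfl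
  rw [h45] at hr2
  rw [hr1, hr2]
  have hd1 : (0 : ℝ) < (dden p ℓ : ℝ) := by exact_mod_cast ddenpos p ℓ hp hℓ
  have hd2 : (0 : ℝ) < (dden p (p - 5) : ℝ) := by
    exact_mod_cast ddenpos p (p - 5) hp le_rfl
  rw [div_le_div_iff₀ hd1 hd2]
  exact_mod_cast cross p ℓ hp hℓ
end

section
/- Let p ≥ 5 and define L_Li(p) = (1/C(p²-p, p-1)) · Σ_{ℓ=1}^{p-1} (ℓ/(ℓ+p-2)) · C(p²-2p+1, ℓ) · C(p-1, ℓ). Then (p-3)/(2p-3) < L_Li(p) < (p-1)/(2p-3). -/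
lemma vdm1 (n m : ℕ) : ∑ k ∈ Finset.range (m+1), n.choose k * m.choose k = (n+m).choose m := by
  rw [Nat.add_choose_eq, Finset.Nat.sum_antidiagonal_eq_sum_range_succ_mk]
  refine Finset.sum_congr rfl fun k hk => ?_
  rw [Finset.mem_range] at hk
  rw [Nat.choose_symm (by omega)]

lemma vdm2 (n s : ℕ) :
    ∑ k ∈ Finset.range (s+2), k * ((n+1).choose k * (s+1).choose k)
      = (n+1) * (n + s + 1).choose s := by
  rw [Finset.sum_range_succ']
  simp only [zero_mul, add_zero]
  have step : ∀ i ∈ Finset.range (s+1),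
      (i+1) * ((n+1).choose (i+1) * (s+1).choose (i+1))
        = (n+1) * (n.choose i * (s+1).choose (s - i)) := by
    intro i hi
    rw [Finset.mem_range] at hi
    have h1 : (n+1) * n.choose i = (n+1).choose (i+1) * (i+1) := Nat.add_one_mul_choose_eq n i
    have h2 : (s+1).choose ((s+1) - (i+1)) = (s+1).choose (i+1) := Nat.choose_symm (by omega)
    have h3 : (s+1) - (i+1) = s - i := by omega
    rw [h3] at h2
    rw [h2, show (i+1) * ((n+1).choose (i+1) * (s+1).choose (i+1))
        = ((n+1).choose (i+1) * (i+1)) * (s+1).choose (i+1) from by ring, ← h1]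
    ring
  rw [Finset.sum_congr rfl step, ← Finset.mul_sum]
  congr 1
  have hv := Nat.add_choose_eq n (s+1) s
  rw [Finset.Nat.sum_antidiagonal_eq_sum_range_succ_mk] at hv
  rw [← hv]
  ring_nf

lemma vdm2' (q : ℕ) (hq : 1 ≤ q) :
    ∑ k ∈ Finset.range (q+1), k * ((q^2).choose k * q.choose k)
      = q^2 * (q^2+q-1).choose (q-1) := by
  obtain ⟨r, rfl⟩ : ∃ r, q = r+1 := ⟨q-1, by omega⟩
  have ha : (r+1)^2 = r^2+2*r+1 := by ring
  rw [ha]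
  generalize r^2 + 2*r = a
  rw [show a+1+(r+1)-1 = a+r+1 from by omega, show r+1-1 = r from rfl]
  exact vdm2 a r

lemma srel (q : ℕ) (hq : 1 ≤ q) :
    (q^2+q).choose q = (q+1) * (q^2+q-1).choose (q-1) := by
  obtain ⟨r, rfl⟩ : ∃ r, q = r+1 := ⟨q-1, by omega⟩
  have ha : (r+1)^2 = r^2+2*r+1 := by ring
  rw [ha]
  generalize hgen : r^2 + 2*r = a
  rw [show a+1+(r+1)-1 = a+r+1 from by omega, show r+1-1 = r from rfl]
  have key := Nat.add_one_mul_choose_eq (a + r + 1) r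
  apply Nat.eq_of_mul_eq_mul_right (show 0 < r+1 by omega)
  rw [show a+1+(r+1) = a+r+1+1 from by omega, ← key, ← hgen]
  ring

/-- The communication load of the Li-CDC scheme for `K = p² - p`, `r = s = p - 1`. -/
noncomputable def LLi (p : ℕ) : ℝ :=
  (∑ ℓ ∈ Finset.Icc 1 (p - 1),
      ((ℓ : ℝ) / ((ℓ : ℝ) + (p : ℝ) - 2)) *
        ((p ^ 2 - 2 * p + 1).choose ℓ : ℝ) * (((p - 1).choose ℓ : ℝ))) /
    ((p ^ 2 - p).choose (p - 1) : ℝ)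

theorem stmt_17 (p : ℕ) (hp : 5 ≤ p) :
    ((p : ℝ) - 3) / (2 * (p : ℝ) - 3) < LLi p ∧
      LLi p < ((p : ℝ) - 1) / (2 * (p : ℝ) - 3) := by
  obtain ⟨q, rfl⟩ : ∃ q, p = q + 1 := ⟨p - 1, by omega⟩
  have hq : 4 ≤ q := by omega
  have hc : (4:ℝ) ≤ (q:ℝ) := by exact_mod_cast hq
  have e1 : (q+1) - 1 = q := rfl
  have e2 : (q+1)^2 - 2*(q+1) + 1 = q^2 := by
    zify [show 2*(q+1) ≤ (q+1)^2 by nlinarith]; ring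
  have e3 : (q+1)^2 - (q+1) = q^2 + q := by
    zify [show (q+1) ≤ (q+1)^2 by nlinarith]; ring
  unfold LLi
  rw [e1, e2, e3]
  push_cast
  set c : ℝ := (q:ℝ) with hcdef
  set N : ℝ := ∑ x ∈ Finset.Icc 1 q,
      (x:ℝ) / ((x:ℝ) + (c + 1) - 2) * ((q ^ 2).choose x : ℝ) * (q.choose x : ℝ) with hN
  set S : ℝ := (((q ^ 2 + q).choose q : ℕ) : ℝ) with hS0
  set C1 : ℝ := (((q ^ 2 + q - 1).choose (q-1) : ℕ) : ℝ) with hC10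
  have hC1pos : 0 < C1 := by
    rw [hC10]
    exact_mod_cast Nat.choose_pos (Nat.sub_le_sub_right (Nat.le_add_left q (q^2)) 1)
  have hSpos : 0 < S := by
    rw [hS0]
    exact_mod_cast Nat.choose_pos (Nat.le_add_left q (q^2))
  have hS : S = (c + 1) * C1 := by
    rw [hS0, hC10, hcdef]
    exact_mod_cast congrArg (Nat.cast (R := ℝ)) (srel q (by omega))
  have hsplit : ∀ f : ℕ → ℝ, f 0 + ∑ ℓ ∈ Finset.Icc 1 q, f ℓ = ∑ ℓ ∈ Finset.range (q+1), f ℓ := by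
    intro f
    have h := Finset.sum_range_add_sum_Ico f (show 1 ≤ q+1 by omega)
    simpa [Finset.Ico_add_one_right_eq_Icc] using h
  have hA : ∑ ℓ ∈ Finset.range (q+1), ((q^2).choose ℓ : ℝ) * (q.choose ℓ : ℝ) = S := by
    rw [hS0]
    exact_mod_cast congrArg (Nat.cast (R := ℝ)) (vdm1 (q^2) q)
  have hB : ∑ ℓ ∈ Finset.range (q+1), (ℓ:ℝ) * (((q^2).choose ℓ : ℝ) * (q.choose ℓ : ℝ))
      = c^2 * C1 := by
    rw [hC10, hcdef]
    exact_mod_cast congrArg (Nat.cast (R := ℝ)) (vdm2' q (by omega))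
  have hIccA : ∑ ℓ ∈ Finset.Icc 1 q, ((q^2).choose ℓ : ℝ) * (q.choose ℓ : ℝ) = S - 1 := by
    have h := hsplit (fun ℓ => ((q^2).choose ℓ : ℝ) * (q.choose ℓ : ℝ))
    simp only [Nat.choose_zero_right, Nat.cast_one, one_mul] at h
    rw [hA] at h
    linarith
  have hIccB : ∑ ℓ ∈ Finset.Icc 1 q, (ℓ:ℝ) * (((q^2).choose ℓ : ℝ) * (q.choose ℓ : ℝ))
      = c^2 * C1 := by
    have h := hsplit (fun ℓ => (ℓ:ℝ) * (((q^2).choose ℓ : ℝ) * (q.choose ℓ : ℝ)))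
    simp only [Nat.cast_zero, zero_mul, zero_add] at h
    rw [hB] at h
    exact h
  have hterm_low : ∀ ℓ ∈ Finset.Icc 1 q,
      ((ℓ:ℝ) * (((q^2).choose ℓ : ℝ) * (q.choose ℓ : ℝ))) / (2*c - 1)
        ≤ (ℓ:ℝ) / ((ℓ:ℝ) + (c + 1) - 2) * ((q ^ 2).choose ℓ : ℝ) * (q.choose ℓ : ℝ) := by
    intro ℓ hℓ
    rw [Finset.mem_Icc] at hℓ
    have h1 : (1:ℝ) ≤ (ℓ:ℝ) := by exact_mod_cast hℓ.1
    have h2 : (ℓ:ℝ) ≤ c := by rw [hcdef]; exact_mod_cast hℓ.2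
    have hd : 0 < (ℓ:ℝ) + (c + 1) - 2 := by linarith
    have hle : (ℓ:ℝ) + (c + 1) - 2 ≤ 2*c - 1 := by linarith
    have step : ((ℓ:ℝ) * (((q^2).choose ℓ : ℝ) * (q.choose ℓ : ℝ))) / (2*c - 1)
        ≤ ((ℓ:ℝ) * (((q^2).choose ℓ : ℝ) * (q.choose ℓ : ℝ))) / ((ℓ:ℝ) + (c + 1) - 2) := by
      gcongr
    refine step.trans_eq ?_
    field_simp
  have hterm_up : ∀ ℓ ∈ Finset.Icc 1 q,
      (ℓ:ℝ) / ((ℓ:ℝ) + (c + 1) - 2) * ((q ^ 2).choose ℓ : ℝ) * (q.choose ℓ : ℝ)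
        ≤ (c / (2*c - 1)) * (((q^2).choose ℓ : ℝ) * (q.choose ℓ : ℝ)) := by
    intro ℓ hℓ
    rw [Finset.mem_Icc] at hℓ
    have h1 : (1:ℝ) ≤ (ℓ:ℝ) := by exact_mod_cast hℓ.1
    have h2 : (ℓ:ℝ) ≤ c := by rw [hcdef]; exact_mod_cast hℓ.2
    have hd : 0 < (ℓ:ℝ) + (c + 1) - 2 := by linarith
    have hAB : (0:ℝ) ≤ ((q^2).choose ℓ : ℝ) * (q.choose ℓ : ℝ) := by positivity
    have key : (ℓ:ℝ) / ((ℓ:ℝ) + (c + 1) - 2) ≤ c / (2*c - 1) := by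
      rw [div_le_div_iff₀ hd (by linarith)]
      nlinarith
    calc (ℓ:ℝ) / ((ℓ:ℝ) + (c + 1) - 2) * ((q ^ 2).choose ℓ : ℝ) * (q.choose ℓ : ℝ)
        = ((ℓ:ℝ) / ((ℓ:ℝ) + (c + 1) - 2)) * (((q^2).choose ℓ : ℝ) * (q.choose ℓ : ℝ)) := by ring
      _ ≤ (c / (2*c - 1)) * (((q^2).choose ℓ : ℝ) * (q.choose ℓ : ℝ)) :=
          mul_le_mul_of_nonneg_right key hAB
  have hlb : c^2 * C1 / (2*c - 1) ≤ N := by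
    have h := Finset.sum_le_sum hterm_low
    rwa [← Finset.sum_div, hIccB, ← hN] at h
  have hub : N ≤ (c / (2*c - 1)) * (S - 1) := by
    have h := Finset.sum_le_sum hterm_up
    rwa [← Finset.mul_sum, hIccA, ← hN] at h
  constructor
  · rw [div_lt_div_iff₀ (by linarith) hSpos]
    have h2 : c^2 * C1 ≤ N * (2*c - 1) := by
      rw [div_le_iff₀ (by linarith)] at hlb
      linarith
    rw [hS]
    clear_value c N S C1
    linarith [h2, mul_pos (show (0:ℝ) < c+2 by linarith) hC1pos]
  · rw [div_lt_div_iff₀ hSpos (by linarith)]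
    have h3 : N * (2*c - 1) ≤ c * (S - 1) := by
      have e : (c / (2*c - 1)) * (S - 1) = c * (S - 1) / (2*c - 1) := by ring
      rw [e, le_div_iff₀ (by linarith)] at hub
      linarith
    clear_value c N S C1
    nlinarith [h3, hSpos, hc]
end

section
/- With L_Li(p) = (1/C(p²-p, p-1)) · Σ_{ℓ=1}^{p-1} (ℓ/(ℓ+p-2)) · C(p²-2p+1, ℓ) · C(p-1, ℓ) and L₁(p) = (p²+p-4)/(2(p²-p)), the ratio L₁(p)/L_Li(p) tends to 1 as p → ∞. -/
set_option maxHeartbeats 1000000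
open Finset Filter


/-- The communication load `L₁(p) = (p² + p - 4)/(2(p² - p))` of the new scheme. -/
noncomputable def L1 (p : ℕ) : ℝ :=
  ((p : ℝ) ^ 2 + (p : ℝ) - 4) / (2 * ((p : ℝ) ^ 2 - (p : ℝ)))

lemma vander (n m : ℕ) :
    ∑ ℓ ∈ range (m+1), n.choose ℓ * m.choose ℓ = (n+m).choose m := by
  rw [Nat.add_choose_eq, Finset.Nat.sum_antidiagonal_eq_sum_range_succ_mk]
  apply Finset.sum_congr rfl
  intro ℓ hℓ
  simp only [Finset.mem_range, Nat.lt_succ_iff] at hℓ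
  rw [Nat.choose_symm hℓ]

lemma vanderB (n m : ℕ) :
    ∑ ℓ ∈ range (m+2), ℓ * ((n+1).choose ℓ * (m+1).choose ℓ)
      = (n+1) * (n+m+1).choose m := by
  rw [Finset.sum_range_succ']
  simp only [Nat.zero_mul, add_zero]
  have key : ∀ i ∈ range (m+1), (i+1) * ((n+1).choose (i+1) * (m+1).choose (i+1))
      = (n+1) * (n.choose i * (m+1).choose (m-i)) := by
    intro i hi
    simp only [Finset.mem_range, Nat.lt_succ_iff] at hi
    have h1 : (n+1).choose (i+1) * (i+1) = (n+1) * n.choose i := by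
      rw [← Nat.add_one_mul_choose_eq]
    have h2 : (m+1).choose (i+1) = (m+1).choose (m-i) := by
      rw [← Nat.choose_symm (by omega : i+1 ≤ m+1)]
      congr 1
      omega
    rw [h2]
    calc (i+1) * ((n+1).choose (i+1) * (m+1).choose (m-i))
        = ((n+1).choose (i+1) * (i+1)) * (m+1).choose (m-i) := by ring
      _ = (n+1) * n.choose i * (m+1).choose (m-i) := by rw [h1]
      _ = (n+1) * (n.choose i * (m+1).choose (m-i)) := by ring
  rw [Finset.sum_congr rfl key, ← Finset.mul_sum]
  congr 1
  rw [show n+m+1 = n + (m+1) by ring, Nat.add_choose_eq,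
    Finset.Nat.sum_antidiagonal_eq_sum_range_succ_mk]

lemma vanderB2 (n m : ℕ) (hn : 1 ≤ n) (hm : 1 ≤ m) :
    ∑ ℓ ∈ range (m+1), ℓ * (n.choose ℓ * m.choose ℓ)
      = n * (n+m-1).choose (m-1) := by
  obtain ⟨n', rfl⟩ : ∃ k, n = k + 1 := ⟨n - 1, by omega⟩
  obtain ⟨m', rfl⟩ : ∃ k, m = k + 1 := ⟨m - 1, by omega⟩
  have h := vanderB n' m'
  have e1 : m' + 1 + 1 = m' + 2 := by omega
  have e2 : n' + 1 + (m' + 1) - 1 = n' + m' + 1 := by omega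
  have e3 : m' + 1 - 1 = m' := by omega
  rw [e1, e2, e3, h]

lemma choose_rel (N k : ℕ) (h1 : 1 ≤ k) (h2 : k ≤ N) :
    k * N.choose k = N * (N-1).choose (k-1) := by
  obtain ⟨N', rfl⟩ : ∃ j, N = j + 1 := ⟨N - 1, by omega⟩
  obtain ⟨k', rfl⟩ : ∃ j, k = j + 1 := ⟨k - 1, by omega⟩
  simp only [Nat.add_sub_cancel]
  have h := Nat.add_one_mul_choose_eq N' k'
  rw [Nat.mul_comm ((N'+1).choose (k'+1)) (k'+1)] at h
  exact h.symm
lemma LLi_bounds (p : ℕ) (hp : 5 ≤ p) :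
    ((p:ℝ)-1)^2 / ((p:ℝ)*(2*(p:ℝ)-3)) ≤ LLi p ∧ LLi p ≤ ((p:ℝ)-1)/(2*(p:ℝ)-3) := by
  set m : ℕ := p - 1 with hm
  have hpm : p = m + 1 := by omega
  have hm4 : 4 ≤ m := by omega
  have hmR : (m:ℝ) = (p:ℝ) - 1 := by rw [hpm]; push_cast; ring
  have hmR4 : (4:ℝ) ≤ (m:ℝ) := by exact_mod_cast hm4
  clear_value m
  have hmz : (m:ℤ) = (p:ℤ) - 1 := by omega
  have h2p : 2*p ≤ p^2 := by nlinarith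
  have h1p : p ≤ p^2 := by nlinarith
  have hsq : p^2 - 2*p + 1 = m^2 := by
    zify [h2p]
    rw [hmz]
    ring
  have hK : p^2 - p = m^2 + m := by
    zify [h1p]
    rw [hmz]
    ring
  set C1 : ℕ → ℝ := fun ℓ => (((m^2).choose ℓ : ℕ) : ℝ) * ((m.choose ℓ : ℕ) : ℝ) with hC1
  set D : ℝ := (((m^2+m).choose m : ℕ) : ℝ) with hD
  have hDpos : 0 < D := by
    rw [hD]
    exact_mod_cast Nat.choose_pos (by nlinarith : m ≤ m^2 + m)
  set S : ℝ := ∑ ℓ ∈ Finset.Icc 1 m, ((ℓ:ℝ) / ((ℓ:ℝ) + (m:ℝ) - 1)) * C1 ℓ with hS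
  have hLLi : LLi p = S / D := by
    rw [LLi, hS, hD]
    simp only [← hm, hsq, hK]
    congr 1
    apply Finset.sum_congr rfl
    intro ℓ _
    rw [hC1, hmR]
    ring
  clear_value S
  clear_value D
  clear_value C1
  have h2m : (0:ℝ) < 2*(m:ℝ)-1 := by linarith
  -- upper bound
  have hsumCC : ∑ ℓ ∈ Finset.range (m+1), C1 ℓ = D := by
    rw [hD, hC1]
    push_cast [← vander (m^2) m]
    rfl
  have hub : S ≤ ((m:ℝ)/(2*(m:ℝ)-1)) * D := by
    calc S ≤ ∑ ℓ ∈ Finset.Icc 1 m, ((m:ℝ)/(2*(m:ℝ)-1)) * C1 ℓ := by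
          rw [hS]
          apply Finset.sum_le_sum
          intro ℓ hℓ
          simp only [Finset.mem_Icc] at hℓ
          have hℓ1 : (1:ℝ) ≤ (ℓ:ℝ) := by exact_mod_cast hℓ.1
          have hℓm : (ℓ:ℝ) ≤ (m:ℝ) := by exact_mod_cast hℓ.2
          have hpos : (0:ℝ) < (ℓ:ℝ) + (m:ℝ) - 1 := by linarith
          have hfrac : (ℓ:ℝ)/((ℓ:ℝ)+(m:ℝ)-1) ≤ (m:ℝ)/(2*(m:ℝ)-1) := by
            rw [div_le_div_iff₀ hpos h2m]
            nlinarith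
          have hCC : (0:ℝ) ≤ C1 ℓ := by rw [hC1]; positivity
          exact mul_le_mul_of_nonneg_right hfrac hCC
      _ = ((m:ℝ)/(2*(m:ℝ)-1)) * ∑ ℓ ∈ Finset.Icc 1 m, C1 ℓ := by rw [Finset.mul_sum]
      _ ≤ ((m:ℝ)/(2*(m:ℝ)-1)) * D := by
          apply mul_le_mul_of_nonneg_left _ (by positivity)
          rw [← hsumCC]
          apply Finset.sum_le_sum_of_subset_of_nonneg
          · intro x hx
            simp only [Finset.mem_Icc] at hx
            simp only [Finset.mem_range]
            omega
          · intro i _ _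
            rw [hC1]; positivity
  -- lower bound
  have hnat : ∑ ℓ ∈ Finset.range (m+1), (ℓ:ℝ) * C1 ℓ
      = (m:ℝ)^2 * (((m^2+m-1).choose (m-1) : ℕ) : ℝ) := by
    rw [hC1]
    have h := vanderB2 (m^2) m (by nlinarith) (by omega)
    have h2 : ((∑ ℓ ∈ Finset.range (m+1), ℓ * ((m^2).choose ℓ * m.choose ℓ) : ℕ) : ℝ)
        = ((m ^ 2 * (m ^ 2 + m - 1).choose (m - 1) : ℕ) : ℝ) := by exact_mod_cast h
    push_cast at h2
    exact h2
  have hrelR : (m:ℝ) * D = ((m:ℝ)^2 + m) * (((m^2+m-1).choose (m-1) : ℕ) : ℝ) := by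
    rw [hD]
    have h := choose_rel (m^2+m) m (by omega) (by nlinarith)
    have h' : (m:ℝ) * (((m^2+m).choose m : ℕ) : ℝ)
        = ((m:ℝ)^2 + (m:ℝ)) * (((m^2+m-1).choose (m-1) : ℕ) : ℝ) := by
      exact_mod_cast h
    linarith [h']
  have hCp : (((m^2+m-1).choose (m-1) : ℕ) : ℝ) = (m:ℝ) * D / ((m:ℝ)^2 + m) := by
    rw [eq_div_iff (by positivity)]
    linarith [hrelR]
  have hlb : ((m:ℝ)^2/((2*(m:ℝ)-1)*((m:ℝ)+1))) * D ≤ S := by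
    have step1 : ∑ ℓ ∈ Finset.Icc 1 m, ((ℓ:ℝ)/(2*(m:ℝ)-1)) * C1 ℓ ≤ S := by
      rw [hS]
      apply Finset.sum_le_sum
      intro ℓ hℓ
      simp only [Finset.mem_Icc] at hℓ
      have hℓ1 : (1:ℝ) ≤ (ℓ:ℝ) := by exact_mod_cast hℓ.1
      have hℓm : (ℓ:ℝ) ≤ (m:ℝ) := by exact_mod_cast hℓ.2
      have hpos : (0:ℝ) < (ℓ:ℝ) + (m:ℝ) - 1 := by linarith
      have hCC : (0:ℝ) ≤ C1 ℓ := by rw [hC1]; positivity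
      apply mul_le_mul_of_nonneg_right _ hCC
      rw [div_le_div_iff₀ h2m hpos]
      nlinarith
    have step2 : ∑ ℓ ∈ Finset.Icc 1 m, ((ℓ:ℝ)/(2*(m:ℝ)-1)) * C1 ℓ
        = (1/(2*(m:ℝ)-1)) * ∑ ℓ ∈ Finset.range (m+1), (ℓ:ℝ) * C1 ℓ := by
      rw [Finset.mul_sum]
      have hset : Finset.range (m+1) = insert 0 (Finset.Icc 1 m) := by
        ext x
        simp only [Finset.mem_range, Finset.mem_insert, Finset.mem_Icc]
        omega
      rw [hset, Finset.sum_insert (by simp)]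
      simp only [Nat.cast_zero, zero_mul, mul_zero, zero_add]
      apply Finset.sum_congr rfl
      intro ℓ _
      ring
    have step3 : (1/(2*(m:ℝ)-1)) * ∑ ℓ ∈ Finset.range (m+1), (ℓ:ℝ) * C1 ℓ
        = ((m:ℝ)^2/((2*(m:ℝ)-1)*((m:ℝ)+1))) * D := by
      rw [hnat, hCp]
      field_simp
    rw [step2, step3] at step1
    exact step1
  constructor
  · rw [hLLi]
    have hEq : ((p:ℝ)-1)^2 / ((p:ℝ)*(2*(p:ℝ)-3)) = (m:ℝ)^2/((2*(m:ℝ)-1)*((m:ℝ)+1)) := by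
      rw [hmR]
      congr 1
      ring
    rw [hEq, le_div_iff₀ hDpos]
    linarith [hlb]
  · rw [hLLi]
    have hEq : ((p:ℝ)-1)/(2*(p:ℝ)-3) = (m:ℝ)/(2*(m:ℝ)-1) := by
      rw [hmR]; ring_nf
    rw [div_le_iff₀ hDpos, hEq]
    linarith [hub]


theorem stmt_18 :
    Filter.Tendsto (fun p : ℕ => L1 p / LLi p) Filter.atTop (nhds 1) := by
  have ht : Filter.Tendsto (fun p : ℕ => ((p:ℝ))⁻¹) Filter.atTop (nhds 0) :=
    tendsto_inv_atTop_zero.comp tendsto_natCast_atTop_atTop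
  have hnum : Filter.Tendsto
      (fun p : ℕ => (1+(p:ℝ)⁻¹-4*((p:ℝ)⁻¹)^2)*(2-3*(p:ℝ)⁻¹)) Filter.atTop (nhds 2) := by
    have h := ((tendsto_const_nhds (x := (1:ℝ)) (f := Filter.atTop (α := ℕ))).add ht
        |>.sub ((ht.pow 2).const_mul 4)).mul
      ((tendsto_const_nhds (x := (2:ℝ)) (f := Filter.atTop (α := ℕ))).sub (ht.const_mul 3))
    convert h using 2 <;> norm_num
  have hden1 : Filter.Tendsto
      (fun p : ℕ => 2*(1-(p:ℝ)⁻¹)^2) Filter.atTop (nhds 2) := by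
    have h := (((tendsto_const_nhds (x := (1:ℝ)) (f := Filter.atTop (α := ℕ))).sub ht).pow 2).const_mul 2
    convert h using 2 <;> norm_num
  have hden2 : Filter.Tendsto
      (fun p : ℕ => 2*(1-(p:ℝ)⁻¹)^3) Filter.atTop (nhds 2) := by
    have h := (((tendsto_const_nhds (x := (1:ℝ)) (f := Filter.atTop (α := ℕ))).sub ht).pow 3).const_mul 2
    convert h using 2 <;> norm_num
  have hVlim0 : Filter.Tendsto
      (fun p : ℕ => (1+(p:ℝ)⁻¹-4*((p:ℝ)⁻¹)^2)*(2-3*(p:ℝ)⁻¹) / (2*(1-(p:ℝ)⁻¹)^2))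
      Filter.atTop (nhds 1) := by
    have h := hnum.div hden1 (by norm_num)
    convert h using 2 <;> norm_num
  have hUlim0 : Filter.Tendsto
      (fun p : ℕ => (1+(p:ℝ)⁻¹-4*((p:ℝ)⁻¹)^2)*(2-3*(p:ℝ)⁻¹) / (2*(1-(p:ℝ)⁻¹)^3))
      Filter.atTop (nhds 1) := by
    have h := hnum.div hden2 (by norm_num)
    convert h using 2 <;> norm_num
  set V : ℕ → ℝ := fun p => L1 p * ((2*(p:ℝ)-3)/((p:ℝ)-1)) with hV
  set U : ℕ → ℝ := fun p => L1 p * ((p:ℝ)*(2*(p:ℝ)-3)/(((p:ℝ)-1)^2)) with hU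
  have hbasic : ∀ p : ℕ, 5 ≤ p → (5:ℝ) ≤ (p:ℝ) := by
    intro p hp; exact_mod_cast hp
  have hVlim : Filter.Tendsto V Filter.atTop (nhds 1) := by
    apply hVlim0.congr'
    filter_upwards [Filter.eventually_ge_atTop 5] with p hp
    have h5 : (5:ℝ) ≤ (p:ℝ) := hbasic p hp
    have h0 : (p:ℝ) ≠ 0 := by linarith
    have h1 : (p:ℝ) - 1 ≠ 0 := by intro h; nlinarith [h]
    have h1' : (p:ℝ)^2 - (p:ℝ) ≠ 0 := by nlinarith
    simp only [hV, L1]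
    field_simp
  have hUlim : Filter.Tendsto U Filter.atTop (nhds 1) := by
    apply hUlim0.congr'
    filter_upwards [Filter.eventually_ge_atTop 5] with p hp
    have h5 : (5:ℝ) ≤ (p:ℝ) := hbasic p hp
    have h0 : (p:ℝ) ≠ 0 := by linarith
    have h1 : (p:ℝ) - 1 ≠ 0 := by intro h; nlinarith [h]
    have h1' : (p:ℝ)^2 - (p:ℝ) ≠ 0 := by nlinarith
    simp only [hU, L1]
    field_simp
  apply tendsto_of_tendsto_of_tendsto_of_le_of_le' hVlim hUlim
  · filter_upwards [Filter.eventually_ge_atTop 5] with p hp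
    obtain ⟨hlb, hub⟩ := LLi_bounds p hp
    have h5 : (5:ℝ) ≤ (p:ℝ) := hbasic p hp
    have hL1 : 0 < L1 p := by
      simp only [L1]; apply div_pos <;> nlinarith
    have hfracpos : 0 < ((p:ℝ)-1)^2 / ((p:ℝ)*(2*(p:ℝ)-3)) := by
      apply div_pos <;> nlinarith
    have hLLipos : 0 < LLi p := lt_of_lt_of_le hfracpos hlb
    simp only [hV]
    rw [le_div_iff₀ hLLipos]
    have hA : 0 ≤ L1 p * ((2*(p:ℝ)-3)/((p:ℝ)-1)) := by
      apply mul_nonneg hL1.le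
      apply div_nonneg <;> nlinarith
    calc L1 p * ((2*(p:ℝ)-3)/((p:ℝ)-1)) * LLi p
        ≤ L1 p * ((2*(p:ℝ)-3)/((p:ℝ)-1)) * (((p:ℝ)-1)/(2*(p:ℝ)-3)) :=
          mul_le_mul_of_nonneg_left hub hA
      _ = L1 p := by
          have e : ((2*(p:ℝ)-3)/((p:ℝ)-1)) * (((p:ℝ)-1)/(2*(p:ℝ)-3)) = 1 := by
            rw [div_mul_div_comm, mul_comm (2*(p:ℝ)-3) ((p:ℝ)-1)]
            exact div_self (by nlinarith)
          rw [mul_assoc, e, mul_one]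
  · filter_upwards [Filter.eventually_ge_atTop 5] with p hp
    obtain ⟨hlb, hub⟩ := LLi_bounds p hp
    have h5 : (5:ℝ) ≤ (p:ℝ) := hbasic p hp
    have hL1 : 0 < L1 p := by
      simp only [L1]; apply div_pos <;> nlinarith
    have hfracpos : 0 < ((p:ℝ)-1)^2 / ((p:ℝ)*(2*(p:ℝ)-3)) := by
      apply div_pos <;> nlinarith
    have hLLipos : 0 < LLi p := lt_of_lt_of_le hfracpos hlb
    simp only [hU]
    rw [div_le_iff₀ hLLipos]
    have hA : 0 ≤ L1 p * ((p:ℝ)*(2*(p:ℝ)-3)/(((p:ℝ)-1)^2)) := by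
      apply mul_nonneg hL1.le
      apply div_nonneg <;> nlinarith
    calc L1 p = L1 p * ((p:ℝ)*(2*(p:ℝ)-3)/(((p:ℝ)-1)^2)) * (((p:ℝ)-1)^2/((p:ℝ)*(2*(p:ℝ)-3))) := by
          have e : ((p:ℝ)*(2*(p:ℝ)-3)/(((p:ℝ)-1)^2)) * (((p:ℝ)-1)^2/((p:ℝ)*(2*(p:ℝ)-3))) = 1 := by
            rw [div_mul_div_comm, mul_comm ((p:ℝ)*(2*(p:ℝ)-3)) (((p:ℝ)-1)^2)]
            exact div_self (by nlinarith)
          rw [mul_assoc, e, mul_one]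
      _ ≤ L1 p * ((p:ℝ)*(2*(p:ℝ)-3)/(((p:ℝ)-1)^2)) * LLi p :=
          mul_le_mul_of_nonneg_left hlb hA
end

section
/- For every prime p, the set D constructed by Ruzsa in Z_{p²-p} is a (p²-p, p-1, 0, 2p-3) almost difference set; equivalently, D is a modular Golomb ruler of size p-1 in Z_{p²-p}, i.e., all differences d-d' for distinct d, d' ∈ D are pairwise distinct modulo p²-p, and the 2p-2 missing differences are exactly the nonzero multiples of p or of p-1. -/
section Aux

variable {p : ℕ}

lemma rz_eq_of_modEq {i j : ℕ} (hi : i ∈ Finset.Icc 1 (p - 1))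
    (hj : j ∈ Finset.Icc 1 (p - 1)) (h : i ≡ j [MOD p - 1]) : i = j := by
  simp only [Finset.mem_Icc] at hi hj
  rcases le_total i j with hij | hij
  · have hd := (Nat.modEq_iff_dvd' hij).mp h
    have := Nat.eq_zero_of_dvd_of_lt hd (by omega)
    omega
  · have hd := (Nat.modEq_iff_dvd' hij).mp h.symm
    have := Nat.eq_zero_of_dvd_of_lt hd (by omega)
    omega

lemma rz_g_ne_zero (hp : p.Prime) {g : ZMod p} (hg : orderOf g = p - 1) : g ≠ 0 := by
  haveI := Fact.mk hp
  intro h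
  have h1 : g ^ (p - 1) = 1 := by rw [← hg]; exact pow_orderOf_eq_one g
  rw [h, zero_pow (by have := hp.two_le; omega)] at h1
  exact zero_ne_one h1

lemma rz_pow_eq_iff (hp : p.Prime) {g : ZMod p} (hg : orderOf g = p - 1) {i j : ℕ} :
    g ^ i = g ^ j ↔ i ≡ j [MOD p - 1] := by
  haveI := Fact.mk hp
  set u : (ZMod p)ˣ := Units.mk0 g (rz_g_ne_zero hp hg) with hu
  have hcoe : (u : ZMod p) = g := rfl
  have hou : orderOf u = p - 1 := by rw [← orderOf_units, hcoe, hg]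
  have hiff : g ^ i = g ^ j ↔ u ^ i = u ^ j := by
    constructor
    · intro h; ext; push_cast [hcoe]; exact h
    · intro h
      have := congrArg (Units.val) h
      push_cast [hcoe] at this
      exact this
  rw [hiff, pow_eq_pow_iff_modEq, hou]

lemma rz_pow_inj (hp : p.Prime) {g : ZMod p} (hg : orderOf g = p - 1) {i j : ℕ}
    (hi : i ∈ Finset.Icc 1 (p - 1)) (hj : j ∈ Finset.Icc 1 (p - 1))
    (h : g ^ i = g ^ j) : i = j :=
  rz_eq_of_modEq hi hj ((rz_pow_eq_iff hp hg).mp h)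

lemma rz_cast_inj {i j : ℕ}
    (hi : i ∈ Finset.Icc 1 (p - 1)) (hj : j ∈ Finset.Icc 1 (p - 1))
    (h : (i : ZMod (p - 1)) = (j : ZMod (p - 1))) : i = j :=
  rz_eq_of_modEq hi hj ((ZMod.natCast_eq_natCast_iff _ _ _).mp h)

lemma rz_pow_surj (hp : p.Prime) {g : ZMod p} (hg : orderOf g = p - 1)
    {c : ZMod p} (hc : c ≠ 0) : ∃ j ∈ Finset.Icc 1 (p - 1), g ^ j = c := by
  haveI := Fact.mk hp
  classical
  set S : Finset (ZMod p) := (Finset.Icc 1 (p - 1)).image (g ^ ·) with hS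
  have hsub : S ⊆ Finset.univ.erase 0 := by
    intro y hy
    simp only [hS, Finset.mem_image] at hy
    obtain ⟨j, hj, rfl⟩ := hy
    exact Finset.mem_erase.mpr ⟨pow_ne_zero _ (rz_g_ne_zero hp hg), Finset.mem_univ _⟩
  have hcardS : S.card = p - 1 := by
    rw [hS, Finset.card_image_of_injOn (fun a ha b hb hab => rz_pow_inj hp hg ha hb hab)]
    rw [Nat.card_Icc]
    omega
  have hcardE : (Finset.univ.erase (0 : ZMod p)).card = p - 1 := by
    rw [Finset.card_erase_of_mem (Finset.mem_univ _), Finset.card_univ, ZMod.card]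
  have hSE : S = Finset.univ.erase 0 := Finset.eq_of_subset_of_card_le hsub (by omega)
  have : c ∈ S := by
    rw [hSE]; exact Finset.mem_erase.mpr ⟨hc, Finset.mem_univ _⟩
  simpa only [hS, Finset.mem_image] using this

lemma rz_diff_unique (hp : p.Prime) {g : ZMod p} (hg : orderOf g = p - 1)
    {i j i' j' : ℕ} (hi : i ∈ Finset.Icc 1 (p - 1)) (hj : j ∈ Finset.Icc 1 (p - 1))
    (hi' : i' ∈ Finset.Icc 1 (p - 1)) (hj' : j' ∈ Finset.Icc 1 (p - 1))
    (hij : i ≠ j)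
    (hA : g ^ i - g ^ j = g ^ i' - g ^ j')
    (hB : (i : ZMod (p - 1)) - (j : ZMod (p - 1)) = (i' : ZMod (p - 1)) - (j' : ZMod (p - 1))) :
    i = i' ∧ j = j' := by
  haveI := Fact.mk hp
  have hadd : ((i + j' : ℕ) : ZMod (p - 1)) = ((i' + j : ℕ) : ZMod (p - 1)) := by
    push_cast
    linear_combination hB
  have hmod : i + j' ≡ i' + j [MOD p - 1] := (ZMod.natCast_eq_natCast_iff _ _ _).mp hadd
  have hBB : g ^ i * g ^ j' = g ^ i' * g ^ j := by
    rw [← pow_add, ← pow_add]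
    exact (rz_pow_eq_iff hp hg).mpr hmod
  have hC : (g ^ i - g ^ i') * (g ^ i - g ^ j) = 0 := by
    linear_combination (g ^ i) * hA - hBB
  have huv : g ^ i - g ^ j ≠ 0 := by
    intro h
    exact hij (rz_pow_inj hp hg hi hj (by linear_combination h))
  have hii' : g ^ i = g ^ i' := by
    rcases mul_eq_zero.mp hC with h | h
    · linear_combination h
    · exact absurd h huv
  have hi_eq : i = i' := rz_pow_inj hp hg hi hi' hii'
  refine ⟨hi_eq, rz_pow_inj hp hg hj hj' ?_⟩
  subst hi_eq
  linear_combination -hA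

end Aux

/-- The difference function `diff_D(x) = |D ∩ (D + x)|`. -/
def diffD {A : Type*} [AddCommGroup A] [Fintype A] [DecidableEq A]
    (D : Finset A) (x : A) : ℕ :=
  (D ∩ D.image (· + x)).card

theorem stmt_19 (p : ℕ) (hp : p.Prime) [NeZero (p ^ 2 - p)]
    (g : ZMod p) (hg : orderOf g = p - 1)
    (D : Finset (ZMod (p ^ 2 - p)))
    (hD : ∀ x : ZMod (p ^ 2 - p),
      x ∈ D ↔ ∃ i ∈ Finset.Icc 1 (p - 1),
        ((x.val : ZMod (p - 1)) = (i : ZMod (p - 1)) ∧ (x.val : ZMod p) = g ^ i)) :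
    D.card = p - 1 ∧
      (∀ x : ZMod (p ^ 2 - p), x ≠ 0 → diffD D x = 0 ∨ diffD D x = 1) ∧
      (Finset.univ.filter
        (fun x : ZMod (p ^ 2 - p) => x ≠ 0 ∧ diffD D x = 0)).card = 2 * p - 3 ∧
      (∀ x : ZMod (p ^ 2 - p), x ≠ 0 →
        (diffD D x = 0 ↔ p ∣ x.val ∨ (p - 1) ∣ x.val)) := by
  classical
  haveI := Fact.mk hp
  have hp2 := hp.two_le
  haveI : NeZero (p - 1) := ⟨by omega⟩
  haveI : NeZero p := ⟨by omega⟩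
  have hNeq : p ^ 2 - p = (p - 1) * p := by
    have h1 : (p - 1) * p = p * p - 1 * p := Nat.sub_mul p 1 p
    have h2 : p ^ 2 = p * p := sq p
    omega
  have hdvd1 : (p - 1) ∣ (p ^ 2 - p) := ⟨p, hNeq⟩
  have hdvd2 : p ∣ (p ^ 2 - p) := ⟨p - 1, by rw [hNeq, mul_comm]⟩
  set f : ZMod (p ^ 2 - p) →+* ZMod (p - 1) × ZMod p :=
    (ZMod.castHom hdvd1 (ZMod (p - 1))).prod (ZMod.castHom hdvd2 (ZMod p)) with hf
  have hf_apply : ∀ x : ZMod (p ^ 2 - p),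
      f x = ((x.val : ZMod (p - 1)), (x.val : ZMod p)) := by
    intro x
    simp [hf, RingHom.prod_apply, ZMod.castHom_apply, ZMod.natCast_val]
  have hcop : Nat.Coprime (p - 1) p := by
    have h := (Nat.coprime_self_add_right (m := p - 1) (n := 1)).mpr (Nat.coprime_one_right _)
    rwa [show p - 1 + 1 = p by omega] at h
  have hfinj : Function.Injective f := by
    rw [injective_iff_map_eq_zero]
    intro x hx
    rw [hf_apply, Prod.ext_iff] at hx
    obtain ⟨h1, h2⟩ := hx
    have hd1 : (p - 1) ∣ x.val := (ZMod.natCast_eq_zero_iff _ _).mp h1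
    have hd2 : p ∣ x.val := (ZMod.natCast_eq_zero_iff _ _).mp h2
    have hd : (p - 1) * p ∣ x.val := hcop.mul_dvd_of_dvd_of_dvd hd1 hd2
    have hlt : x.val < (p - 1) * p := by have := ZMod.val_lt x; omega
    have : x.val = 0 := Nat.eq_zero_of_dvd_of_lt hd hlt
    exact (ZMod.val_eq_zero x).mp this
  have hfbij : Function.Bijective f := by
    rw [Fintype.bijective_iff_injective_and_card]
    refine ⟨hfinj, ?_⟩
    rw [Fintype.card_prod, ZMod.card, ZMod.card, ZMod.card, hNeq]
  set e : ℕ → ZMod (p - 1) × ZMod p := fun i => ((i : ZMod (p - 1)), g ^ i) with he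
  have hD' : ∀ x : ZMod (p ^ 2 - p),
      x ∈ D ↔ ∃ i ∈ Finset.Icc 1 (p - 1), f x = e i := by
    intro x
    rw [hD x]
    refine exists_congr fun i => ?_
    refine and_congr_right fun _ => ?_
    rw [hf_apply, he, Prod.ext_iff]
  have hmemS : ∀ x y : ZMod (p ^ 2 - p), y ∈ D ∩ D.image (· + x) ↔
      (∃ i ∈ Finset.Icc 1 (p - 1), f y = e i) ∧
      (∃ j ∈ Finset.Icc 1 (p - 1), f y - f x = e j) := by
    intro x y
    rw [Finset.mem_inter, hD' y]
    refine and_congr_right fun _ => ?_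
    rw [Finset.mem_image]
    constructor
    · rintro ⟨z, hz, rfl⟩
      obtain ⟨j, hj, hfz⟩ := (hD' z).mp hz
      refine ⟨j, hj, ?_⟩
      rw [map_add, ← hfz]
      ring
    · rintro ⟨j, hj, hfy⟩
      refine ⟨y - x, (hD' _).mpr ⟨j, hj, by rw [map_sub]; exact hfy⟩, ?_⟩
      show y - x + x = y
      ring
  have hcard_le : ∀ x : ZMod (p ^ 2 - p), x ≠ 0 → (D ∩ D.image (· + x)).card ≤ 1 := by
    intro x hx
    rw [Finset.card_le_one]
    intro y hy y' hy'
    obtain ⟨⟨i, hi, hyi⟩, ⟨j, hj, hyj⟩⟩ := (hmemS x y).mp hy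
    obtain ⟨⟨i', hi', hyi'⟩, ⟨j', hj', hyj'⟩⟩ := (hmemS x y').mp hy'
    have hfx : f x = e i - e j := by rw [← hyi, ← hyj]; ring
    have hfx' : f x = e i' - e j' := by rw [← hyi', ← hyj']; ring
    have hij : i ≠ j := by
      rintro rfl
      exact hx (hfinj (by rw [map_zero, hfx, sub_self]))
    have hij' : i' ≠ j' := by
      rintro rfl
      exact hx (hfinj (by rw [map_zero, hfx', sub_self]))
    have heq : e i - e j = e i' - e j' := by rw [← hfx, ← hfx']
    rw [he] at heq
    rw [Prod.ext_iff] at heq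
    simp only [Prod.fst_sub, Prod.snd_sub] at heq
    obtain ⟨h1, h2⟩ := heq
    obtain ⟨hii', hjj'⟩ := rz_diff_unique hp hg hi hj hi' hj' hij h2 h1
    apply hfinj
    rw [hyi, hyi', hii']
  have hchar : ∀ x : ZMod (p ^ 2 - p), x ≠ 0 →
      ((D ∩ D.image (· + x)).Nonempty ↔ (f x).1 ≠ 0 ∧ (f x).2 ≠ 0) := by
    intro x hx
    constructor
    · rintro ⟨y, hy⟩
      obtain ⟨⟨i, hi, hyi⟩, ⟨j, hj, hyj⟩⟩ := (hmemS x y).mp hy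
      have hfx : f x = e i - e j := by rw [← hyi, ← hyj]; ring
      have hij : i ≠ j := by
        rintro rfl
        exact hx (hfinj (by rw [map_zero, hfx, sub_self]))
      constructor
      · rw [hfx]
        simp only [he, Prod.fst_sub]
        intro h
        exact hij (rz_cast_inj hi hj (by linear_combination h))
      · rw [hfx]
        simp only [he, Prod.snd_sub]
        intro h
        exact hij (rz_pow_inj hp hg hi hj (by linear_combination h))
    · rintro ⟨ha, hb⟩
      set a : ZMod (p - 1) := (f x).1 with hadef
      set b : ZMod p := (f x).2 with hbdef
      set k : ℕ := a.val with hk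
      have hk1 : 1 ≤ k := by
        rcases Nat.eq_zero_or_pos k with h | h
        · exact absurd ((ZMod.val_eq_zero a).mp h) ha
        · exact h
      have hk2 : k < p - 1 := ZMod.val_lt a
      have hka : (k : ZMod (p - 1)) = a := by rw [hk, ZMod.natCast_val, ZMod.cast_id]
      have hgk : g ^ k ≠ 1 := by
        intro h
        have := Nat.le_of_dvd hk1 (hg ▸ orderOf_dvd_of_pow_eq_one h)
        omega
      have hgk0 : g ^ k - 1 ≠ 0 := sub_ne_zero.mpr hgk
      have hc : b * (g ^ k - 1)⁻¹ ≠ 0 := mul_ne_zero hb (inv_ne_zero hgk0)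
      obtain ⟨j, hj, hgj⟩ := rz_pow_surj hp hg hc
      have hjb := Finset.mem_Icc.mp hj
      set i : ℕ := (j + k - 1) % (p - 1) + 1 with hi_def
      have hi : i ∈ Finset.Icc 1 (p - 1) := by
        rw [Finset.mem_Icc]
        have := Nat.mod_lt (j + k - 1) (y := p - 1) (by omega)
        omega
      have hmod : i ≡ j + k [MOD p - 1] := by
        have h1 : (j + k - 1) % (p - 1) ≡ j + k - 1 [MOD p - 1] := Nat.mod_modEq _ _
        have h2 := h1.add_right 1
        rw [hi_def]
        have h3 : j + k - 1 + 1 = j + k := by omega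
        rwa [h3] at h2
      have hij : i ≠ j := by
        intro h
        rw [h] at hmod
        have hd := (Nat.modEq_iff_dvd' (Nat.le_add_right j k)).mp hmod
        rw [Nat.add_sub_cancel_left] at hd
        have := Nat.eq_zero_of_dvd_of_lt hd (by omega)
        omega
      have hfx : f x = e i - e j := by
        have hic : (i : ZMod (p - 1)) = ((j + k : ℕ) : ZMod (p - 1)) :=
          (ZMod.natCast_eq_natCast_iff _ _ _).mpr hmod
        have hgi : g ^ i = g ^ j * g ^ k := by
          rw [(rz_pow_eq_iff hp hg).mpr hmod, pow_add]
        have hfst : a = (i : ZMod (p - 1)) - (j : ZMod (p - 1)) := by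
          rw [hic]
          push_cast
          linear_combination -hka
        have hsnd : b = g ^ i - g ^ j := by
          rw [hgi, hgj]
          have h1 : b * (g ^ k - 1)⁻¹ * g ^ k - b * (g ^ k - 1)⁻¹
              = b * ((g ^ k - 1)⁻¹ * (g ^ k - 1)) := by ring
          rw [h1, inv_mul_cancel₀ hgk0, mul_one]
        have hfxab : f x = (a, b) := rfl
        rw [hfxab, he, Prod.ext_iff]
        exact ⟨by simpa using hfst, by simpa using hsnd⟩
      obtain ⟨y, hy⟩ := hfbij.2 (e i)
      refine ⟨y, (hmemS x y).mpr ⟨⟨i, hi, hy⟩, ⟨j, hj, ?_⟩⟩⟩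
      rw [hy, hfx]
      ring
  -- goal 1
  have hDcard : D.card = p - 1 := by
    have himg : D.image f = (Finset.Icc 1 (p - 1)).image e := by
      ext y
      simp only [Finset.mem_image]
      constructor
      · rintro ⟨x, hx, rfl⟩
        obtain ⟨i, hi, hfi⟩ := (hD' x).mp hx
        exact ⟨i, hi, hfi.symm⟩
      · rintro ⟨i, hi, rfl⟩
        obtain ⟨x, hx⟩ := hfbij.2 (e i)
        exact ⟨x, (hD' x).mpr ⟨i, hi, hx⟩, hx⟩
    have h1 : (D.image f).card = D.card := Finset.card_image_of_injective D hfinj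
    have h2 : ((Finset.Icc 1 (p - 1)).image e).card = p - 1 := by
      rw [Finset.card_image_of_injOn, Nat.card_Icc]
      · omega
      · intro a ha b hb hab
        exact rz_cast_inj ha hb (congrArg Prod.fst hab)
    rw [← h1, himg, h2]
  -- goal 2
  have hdiff01 : ∀ x : ZMod (p ^ 2 - p), x ≠ 0 → diffD D x = 0 ∨ diffD D x = 1 := fun x hx =>
    Nat.le_one_iff_eq_zero_or_eq_one.mp (hcard_le x hx)
  -- key iff
  have hdiff0_iff : ∀ x : ZMod (p ^ 2 - p), x ≠ 0 →
      (diffD D x = 0 ↔ ((f x).1 = 0 ∨ (f x).2 = 0)) := by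
    intro x hx
    show (D ∩ D.image (· + x)).card = 0 ↔ _
    rw [Finset.card_eq_zero, ← Finset.not_nonempty_iff_eq_empty, hchar x hx]
    tauto
  -- goal 4
  have hgoal4 : ∀ x : ZMod (p ^ 2 - p), x ≠ 0 →
      (diffD D x = 0 ↔ p ∣ x.val ∨ (p - 1) ∣ x.val) := by
    intro x hx
    rw [hdiff0_iff x hx, hf_apply x]
    simp only [ZMod.natCast_eq_zero_iff]
    tauto
  -- goal 3
  have hcount : (Finset.univ.filter
      (fun x : ZMod (p ^ 2 - p) => x ≠ 0 ∧ diffD D x = 0)).card = 2 * p - 3 := by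
    set T : Finset (ZMod (p - 1) × ZMod p) :=
      (({0} : Finset (ZMod (p - 1))) ×ˢ Finset.univ.erase 0) ∪
      ((Finset.univ.erase (0 : ZMod (p - 1))) ×ˢ ({0} : Finset (ZMod p))) with hT
    have hmemT : ∀ y : ZMod (p - 1) × ZMod p, y ∈ T ↔ (y ≠ 0 ∧ (y.1 = 0 ∨ y.2 = 0)) := by
      rintro ⟨y1, y2⟩
      rw [hT]
      simp only [Finset.mem_union, Finset.mem_product, Finset.mem_singleton, Finset.mem_erase,
        Finset.mem_univ, and_true, Ne, Prod.ext_iff, Prod.fst_zero, Prod.snd_zero]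
      tauto
    have hdisj : Disjoint (({0} : Finset (ZMod (p - 1))) ×ˢ Finset.univ.erase 0)
        ((Finset.univ.erase (0 : ZMod (p - 1))) ×ˢ ({0} : Finset (ZMod p))) := by
      rw [Finset.disjoint_left]
      rintro ⟨y1, y2⟩ h1 h2
      rw [Finset.mem_product] at h1 h2
      simp only [Finset.mem_singleton, Finset.mem_erase] at h1 h2
      exact h2.1.1 h1.1
    have hcardT : T.card = 2 * p - 3 := by
      rw [hT, Finset.card_union_of_disjoint hdisj, Finset.card_product, Finset.card_product]
      simp only [Finset.card_singleton, Finset.card_erase_of_mem (Finset.mem_univ _),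
        Finset.card_univ, ZMod.card]
      omega
    have hfilter : (Finset.univ.filter
        (fun x : ZMod (p ^ 2 - p) => x ≠ 0 ∧ diffD D x = 0)).card = T.card := by
      apply Finset.card_bij (fun x _ => f x)
      · intro x hx
        rw [Finset.mem_filter] at hx
        obtain ⟨-, hx0, hdx⟩ := hx
        rw [hmemT]
        refine ⟨fun h => hx0 (hfinj (h.trans (map_zero f).symm)), ?_⟩
        exact (hdiff0_iff x hx0).mp hdx
      · intro x hx x' hx' h
        exact hfinj h
      · intro y hy
        rw [hmemT] at hy
        obtain ⟨x, rfl⟩ := hfbij.2 y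
        have hx0 : x ≠ 0 := fun h => hy.1 (by rw [h, map_zero])
        exact ⟨x, Finset.mem_filter.mpr ⟨Finset.mem_univ _, hx0,
          (hdiff0_iff x hx0).mpr hy.2⟩, rfl⟩
    rw [hfilter, hcardT]
  exact ⟨hDcard, hdiff01, hcount, hgoal4⟩
end
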